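/- For the call-by-value xCL system extended with the auxiliary application operators ◐ and ∘: for every closed extended term t and every value v, t ⇓ v in the extended big-step semantics if and only if t →* v in the extended small-step semantics. -/

import Mathlib

/-- Closed terms of xCL extended with the auxiliary application operators
`◐` (`half`) and `∘` (`comp`). -/
inductive Tm : Type
  | S : Tm
  | K : Tm
  | I : Tm
  | S1 : Tm → Tm
  | K1 : Tm → Tm
  | S2 : Tm → Tm → Tm
  | app : Tm → Tm → Tm
  | half : Tm → Tm → Tm
  | comp : Tm → Tm → Tm

/-- Values: topmost constructor among `S, K, I, S', K', S''`. -/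
def Tm.IsValue : Tm → Prop
  | .app _ _ => False
  | .half _ _ => False
  | .comp _ _ => False
  | _ => True

/-- Labeled value transitions `t ─s→ t'`. -/
inductive LStep : Tm → Tm → Tm → Prop
  | S (t : Tm) : LStep .S t (.S1 t)
  | S1 (t s : Tm) : LStep (.S1 t) s (.S2 t s)
  | S2 (t s r : Tm) : LStep (.S2 t s) r (.app (.app t r) (.app s r))
  | K (t : Tm) : LStep .K t (.K1 t)
  | K1 (t s : Tm) : LStep (.K1 t) s t
  | I (t : Tm) : LStep .I t t

/-- Extended small-step unlabeled relation `→`. -/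
inductive Step : Tm → Tm → Prop
  | appL {t t' : Tm} (s : Tm) : Step t t' → Step (.app t s) (.app t' s)
  | appV {s t : Tm} : s.IsValue → Step (.app s t) (.half s t)
  | halfR {t s s' : Tm} : Step s s' → Step (.half t s) (.half t s')
  | halfV {s t : Tm} : t.IsValue → Step (.half s t) (.comp s t)
  | compL {t t' s : Tm} : Step t t' → Step (.comp t s) (.comp t' s)
  | compBeta {t s t' : Tm} : LStep t s t' → Step (.comp t s) t'

/-- Extended big-step semantics `t ⇓ v`. -/
inductive Big : Tm → Tm → Prop
  | val {v : Tm} : v.IsValue → Big v v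
  | app {s t w v : Tm} : Big s w → Big (.half w t) v → Big (.app s t) v
  | half {s t w v : Tm} : Big t w → Big (.comp s w) v → Big (.half s t) v
  | compI {s t v : Tm} : Big s .I → Big t v → Big (.comp s t) v
  | compK {s t : Tm} : Big s .K → Big (.comp s t) (.K1 t)
  | compS {s t : Tm} : Big s .S → Big (.comp s t) (.S1 t)
  | compK1 {s t r v : Tm} : Big s (.K1 r) → Big r v → Big (.comp s t) v
  | compS1 {s t r : Tm} : Big s (.S1 r) → Big (.comp s t) (.S2 r t)
  | compS2 {s t r q v : Tm} :
      Big s (.S2 r q) → Big (.app (.app r t) (.app q t)) v → Big (.comp s t) v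


lemma big_value {t v : Tm} (h : Big t v) : v.IsValue := by
  induction h <;> first | assumption | trivial

lemma rtg_appL {t t' : Tm} (s : Tm) (h : Relation.ReflTransGen Step t t') :
    Relation.ReflTransGen Step (.app t s) (.app t' s) :=
  Relation.ReflTransGen.lift (fun x => Tm.app x s) (fun _ _ h => Step.appL s h) _ _ h

lemma rtg_halfR {s s' : Tm} (t : Tm) (h : Relation.ReflTransGen Step s s') :
    Relation.ReflTransGen Step (.half t s) (.half t s') :=
  Relation.ReflTransGen.lift (fun x => Tm.half t x) (fun _ _ h => Step.halfR h) _ _ h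

lemma rtg_compL {t t' : Tm} (s : Tm) (h : Relation.ReflTransGen Step t t') :
    Relation.ReflTransGen Step (.comp t s) (.comp t' s) :=
  Relation.ReflTransGen.lift (fun x => Tm.comp x s) (fun _ _ h => Step.compL h) _ _ h

lemma big_to_small {t v : Tm} (h : Big t v) : Relation.ReflTransGen Step t v := by
  induction h with
  | val _ => exact .refl
  | app hs hh ih1 ih2 =>
      exact ((rtg_appL _ ih1).tail (Step.appV (big_value hs))).trans ih2
  | half ht hc ih1 ih2 =>
      exact ((rtg_halfR _ ih1).tail (Step.halfV (big_value ht))).trans ih2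
  | compI hs ht ih1 ih2 =>
      exact ((rtg_compL _ ih1).tail (Step.compBeta (LStep.I _))).trans ih2
  | compK hs ih =>
      exact (rtg_compL _ ih).tail (Step.compBeta (LStep.K _))
  | compS hs ih =>
      exact (rtg_compL _ ih).tail (Step.compBeta (LStep.S _))
  | compK1 hs hr ih1 ih2 =>
      exact ((rtg_compL _ ih1).tail (Step.compBeta (LStep.K1 _ _))).trans ih2
  | compS1 hs ih =>
      exact (rtg_compL _ ih).tail (Step.compBeta (LStep.S1 _ _))
  | compS2 hs hb ih1 ih2 =>
      exact ((rtg_compL _ ih1).tail (Step.compBeta (LStep.S2 _ _ _))).trans ih2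

lemma step_big {t t' v : Tm} (hs : Step t t') (hb : Big t' v) : Big t v := by
  induction hs generalizing v with
  | appL s h ih =>
      cases hb with
      | val hv => exact absurd hv (by simp [Tm.IsValue])
      | app h1 h2 => exact Big.app (ih h1) h2
  | appV hval => exact Big.app (Big.val hval) hb
  | halfR h ih =>
      cases hb with
      | val hv => exact absurd hv (by simp [Tm.IsValue])
      | half h1 h2 => exact Big.half (ih h1) h2
  | halfV hval => exact Big.half (Big.val hval) hb
  | compL h ih =>
      cases hb with
      | val hv => exact absurd hv (by simp [Tm.IsValue])
      | compI h1 h2 => exact Big.compI (ih h1) h2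
      | compK h1 => exact Big.compK (ih h1)
      | compS h1 => exact Big.compS (ih h1)
      | compK1 h1 h2 => exact Big.compK1 (ih h1) h2
      | compS1 h1 => exact Big.compS1 (ih h1)
      | compS2 h1 h2 => exact Big.compS2 (ih h1) h2
  | compBeta hl =>
      cases hl with
      | S t =>
          cases hb with
          | val _ => exact Big.compS (Big.val trivial)
      | S1 t s =>
          cases hb with
          | val _ => exact Big.compS1 (Big.val trivial)
      | S2 t s r => exact Big.compS2 (Big.val trivial) hb
      | K t =>
          cases hb with
          | val _ => exact Big.compK (Big.val trivial)
      | K1 t s => exact Big.compK1 (Big.val trivial) hb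
      | I t => exact Big.compI (Big.val trivial) hb

/-- Big-step/small-step equivalence for the call-by-value xCL system extended
with the auxiliary application operators `◐` and `∘`. -/
theorem xCL_extended_big_iff_small (t v : Tm) (hv : v.IsValue) :
    Big t v ↔ Relation.ReflTransGen Step t v := by
  constructor
  · exact big_to_small
  · intro h
    induction h using Relation.ReflTransGen.head_induction_on with
    | refl => exact Big.val hv
    | head hst _ ih => exact step_big hst ih
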